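/- Hadamard expansion, norm bound, and cluster counting: Let H = Σ_{a=1}^m H_a be an n-qubit Hamiltonian with ‖H_a‖_op ≤ 1 and degree d ≥ 2. For every matrix X and every α ∈ ℂ, e^{αH} X e^{−αH} = Σ_{k≥0} Σ_{a_1,…,a_k ∈ [m]} (α^k/k!)·[H_{a_k},[…[H_{a_2},[H_{a_1}, X]]…]]. Moreover: (i) ‖[H_{a_k},[…[H_{a_1}, X]…]]‖_op ≤ 2^k·‖X‖_op; (ii) this nested commutator is zero unless (a_1,…,a_k) is a cluster from supp(X), i.e. for each ℓ ∈ [k] the support of H_{a_ℓ} intersects supp(X) ∪ supp(H_{a_1}) ∪ … ∪ supp(H_{a_{ℓ−1}}); (iii) if supp(X) ⊆ supp(H_b) for some b ∈ [m], then the number of clusters of length k from supp(X) is at most k!·(d+1)^k. -/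

import Mathlib

open scoped BigOperators
open Classical
open scoped ComplexOrder

noncomputable section

/-- Index type for the standard basis of the `n`-qubit Hilbert space `(ℂ²)^{⊗n}`. -/
abbrev QIdx (n : ℕ) := Fin n → Fin 2

/-- Operators (matrices) on the `n`-qubit Hilbert space `(ℂ²)^{⊗n}`. -/
abbrev QMat (n : ℕ) := Matrix (QIdx n) (QIdx n) ℂ

/-- The trace norm (Schatten 1-norm) of a matrix: `‖A‖₁ = tr √(AᴴA)`. -/
noncomputable def traceNorm {I : Type} [Fintype I] [DecidableEq I] (A : Matrix I I ℂ) : ℝ :=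
  (((Matrix.posSemidef_conjTranspose_mul_self A).1.eigenvectorUnitary : Matrix I I ℂ) *
    Matrix.diagonal (fun i => ((Real.sqrt ((Matrix.posSemidef_conjTranspose_mul_self A).1.eigenvalues i) : ℝ) : ℂ)) *
    (star ((Matrix.posSemidef_conjTranspose_mul_self A).1.eigenvectorUnitary : Matrix I I ℂ))).trace.re

/-- The operator norm (spectral norm) of a complex matrix. -/
noncomputable def opNorm {I : Type} [Fintype I] [DecidableEq I] (A : Matrix I I ℂ) : ℝ :=
  ‖Matrix.toEuclideanCLM (𝕜 := ℂ) A‖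

/-- The partial trace of an `n`-qubit operator over the qubit at site `i`, as an operator
on the remaining qubits. -/
noncomputable def ptraceSite {n : ℕ} (i : Fin n) (X : QMat n) :
    Matrix ({j : Fin n // j ≠ i} → Fin 2) ({j : Fin n // j ≠ i} → Fin 2) ℂ :=
  fun a b => ∑ s : Fin 2,
    X (fun j => if h : j = i then s else a ⟨j, h⟩) (fun j => if h : j = i then s else b ⟨j, h⟩)

/-- A transport plan for a (traceless Hermitian) operator `X`: a decomposition
`X = Σ_i X_i` into Hermitian matrices with `tr_i(X_i) = 0`. -/
structure IsTransportPlan {n : ℕ} (X : QMat n) (Xs : Fin n → QMat n) : Prop where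
  herm : ∀ i, (Xs i).IsHermitian
  traceless : ∀ i, (Xs i).trace = 0
  sum_eq : ∑ i, Xs i = X
  ptrace_eq : ∀ i, ptraceSite i (Xs i) = 0

/-- The quantum Wasserstein norm of order 1 of De Palma–Marvian–Trevisan–Lloyd. -/
noncomputable def wnorm {n : ℕ} (X : QMat n) : ℝ :=
  sInf {c : ℝ | ∃ Xs : Fin n → QMat n, IsTransportPlan X Xs ∧ c = ∑ i, traceNorm (Xs i) / 2}

/-- A density matrix: positive semidefinite with unit trace. -/
def IsDensity {n : ℕ} (ρ : QMat n) : Prop := ρ.PosSemidef ∧ ρ.trace = 1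

/-- The Dobrushin influence matrix of a map `Φ = Φ₁ + ⋯ + Φ_n`:
`D_{ij} = max { ‖Φ_i(ρ − ϱ)‖_{W1} : ρ, ϱ density matrices with tr_j(ρ − ϱ) = 0 }`. -/
noncomputable def dobrushin {n : ℕ} (Φs : Fin n → (QMat n → QMat n)) :
    Matrix (Fin n) (Fin n) ℝ :=
  fun i j => sSup {w : ℝ | ∃ ρ ϱ : QMat n, IsDensity ρ ∧ IsDensity ϱ ∧
    ptraceSite j (ρ - ϱ) = 0 ∧ w = wnorm (Φs i (ρ - ϱ))}

/-- The `1 → 1` norm of a real matrix: the maximum column `ℓ₁`-norm. -/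
noncomputable def norm11 {n : ℕ} (D : Matrix (Fin n) (Fin n) ℝ) : ℝ :=
  ⨆ j, ∑ i, |D i j|

/-- `Q` is an update matrix for `Φ` if `Φ` maps any transport plan with cost vector `x`
to a transport plan with cost vector entrywise at most `Q x`. -/
def IsUpdateMatrix {n : ℕ} (Q : Matrix (Fin n) (Fin n) ℝ) (Φ : QMat n → QMat n) : Prop :=
  ∀ (X : QMat n) (Xs : Fin n → QMat n), IsTransportPlan X Xs →
    ∃ Ys : Fin n → QMat n, IsTransportPlan (Φ X) Ys ∧
      ∀ j, traceNorm (Ys j) / 2 ≤ Q.mulVec (fun i => traceNorm (Xs i) / 2) j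

/-! ### Hamiltonian combinatorics -/

/-- `M` is supported on the set of qubits `S` (i.e. `M = M_S ⊗ Id`). -/
def SupportedOn {n : ℕ} (S : Finset (Fin n)) (M : QMat n) : Prop :=
  (∀ a b : QIdx n, (∃ j, j ∉ S ∧ a j ≠ b j) → M a b = 0) ∧
  (∀ a b a' b' : QIdx n, (∀ j ∈ S, a j = a' j) → (∀ j ∈ S, b j = b' j) →
     (∀ j ∉ S, a j = b j) → (∀ j ∉ S, a' j = b' j) → M a b = M a' b')

/-- The support of an operator: the minimal set of qubits on which it acts nontrivially. -/
noncomputable def supp {n : ℕ} (M : QMat n) : Finset (Fin n) :=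
  (Finset.univ.filter fun S : Finset (Fin n) => SupportedOn S M).inf id

/-- The interaction graph of a local Hamiltonian: two distinct sites are adjacent iff
some term's support contains both. -/
def interGraph {n m : ℕ} (Hterm : Fin m → QMat n) : SimpleGraph (Fin n) where
  Adj i j := i ≠ j ∧ ∃ a, i ∈ supp (Hterm a) ∧ j ∈ supp (Hterm a)
  symm := by
    refine ⟨?_⟩
    rintro i j ⟨hij, a, hi, hj⟩
    exact ⟨hij.symm, a, hj, hi⟩
  loopless := by
    refine ⟨?_⟩
    rintro i ⟨hii, -⟩
    exact hii rfl

/-- The graph distance on sites induced by the interaction hypergraph. -/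
noncomputable def hamDist {n m : ℕ} (Hterm : Fin m → QMat n) (i j : Fin n) : ℕ :=
  (interGraph Hterm).dist i j

/-- The ball of radius `r` around site `i` in the interaction graph distance. -/
noncomputable def ballH {n m : ℕ} (Hterm : Fin m → QMat n) (i : Fin n) (r : ℕ) :
    Finset (Fin n) :=
  Finset.univ.filter fun j => hamDist Hterm i j ≤ r

/-- Distance from a site to a set of sites. -/
noncomputable def distToSet {n m : ℕ} (Hterm : Fin m → QMat n) (j : Fin n)
    (S : Finset (Fin n)) : ℕ :=
  sInf {r : ℕ | ∃ i ∈ S, hamDist Hterm j i = r}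

/-- Distance between two sets of sites. -/
noncomputable def setDist {n m : ℕ} (Hterm : Fin m → QMat n) (S T : Finset (Fin n)) : ℕ :=
  sInf {r : ℕ | ∃ i ∈ S, ∃ j ∈ T, hamDist Hterm i j = r}

/-- For `S ⊆ [n]`, the real matrix `E_S` with `(E_S)_{uv} = 1` iff `u, v ∈ S`. -/
def ESet {n : ℕ} (S : Finset (Fin n)) : Matrix (Fin n) (Fin n) ℝ :=
  fun u v => if u ∈ S ∧ v ∈ S then 1 else 0

/-- `S_a`: the union of the supports of the terms appearing in the sequence `a`. -/
noncomputable def SOf {n m : ℕ} (Hterm : Fin m → QMat n) {s : ℕ} (a : Fin s → Fin m) :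
    Finset (Fin n) :=
  Finset.univ.biUnion fun ℓ => supp (Hterm (a ℓ))

/-- `a` is a cluster from the set `S₀`: each term's support intersects `S₀` together with
the supports of the previous terms. -/
def IsClusterFrom {n m : ℕ} (Hterm : Fin m → QMat n) (S0 : Finset (Fin n)) {s : ℕ}
    (a : Fin s → Fin m) : Prop :=
  ∀ ℓ : Fin s, ∃ j ∈ supp (Hterm (a ℓ)),
    j ∈ S0 ∨ ∃ p : Fin s, p < ℓ ∧ j ∈ supp (Hterm (a p))

/-- The ball of radius `r` around a set of sites. -/
noncomputable def ballOfSet {n m : ℕ} (Hterm : Fin m → QMat n) (S : Finset (Fin n)) (r : ℕ) :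
    Finset (Fin n) :=
  Finset.univ.filter fun j => distToSet Hterm j S ≤ r

/-! ### Matrix exponentials, Gibbs states, and the balanced Lindbladian -/

/-- The matrix exponential, via its power series. -/
noncomputable def mexp {I : Type} [Fintype I] [DecidableEq I] (A : Matrix I I ℂ) :
    Matrix I I ℂ :=
  ∑' k : ℕ, ((k.factorial : ℂ)⁻¹ • A ^ k)

/-- The Gibbs state `σ = e^{−βH} / tr(e^{−βH})` at inverse temperature `β`. -/
noncomputable def gibbs {I : Type} [Fintype I] [DecidableEq I] (β : ℝ) (H : Matrix I I ℂ) :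
    Matrix I I ℂ :=
  (mexp ((-β : ℂ) • H)).trace⁻¹ • mexp ((-β : ℂ) • H)

/-- The real power `A^r` of a Hermitian matrix, via its spectral decomposition. -/
noncomputable def hermPow {I : Type} [Fintype I] [DecidableEq I] (A : Matrix I I ℂ) (r : ℝ) :
    Matrix I I ℂ :=
  if h : A.IsHermitian then
    (h.eigenvectorUnitary : Matrix I I ℂ) *
      Matrix.diagonal (fun i => ((h.eigenvalues i ^ r : ℝ) : ℂ)) *
      star (h.eigenvectorUnitary : Matrix I I ℂ)
  else 0

/-- The coherent term `G^P` of the balanced Lindbladian, defined in the eigenbasis of `σ`. -/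
noncomputable def coherentG {I : Type} [Fintype I] [DecidableEq I] (σ P : Matrix I I ℂ) :
    Matrix I I ℂ :=
  if h : σ.IsHermitian then
    let U : Matrix I I ℂ := h.eigenvectorUnitary
    let lam : I → ℝ := h.eigenvalues
    let P' : Matrix I I ℂ := star U * P * U
    let w : I → I → ℝ := fun i j =>
      (lam i ^ ((1:ℝ)/2) - lam j ^ ((1:ℝ)/2)) /
        (2 * lam i ^ ((1:ℝ)/4) * lam j ^ ((1:ℝ)/4) *
          (lam i ^ ((1:ℝ)/2) + lam j ^ ((1:ℝ)/2)))
    let G' : Matrix I I ℂ := Matrix.of (fun i j =>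
      (-Complex.I) * ((w i j : ℝ) : ℂ) *
        (∑ t, ((lam t ^ ((1:ℝ)/2) : ℝ) : ℂ) * P' i t * P' t j))
    U * G' * star U
  else 0

/-- The jump operator `A^P = σ^{1/4} P σ^{−1/4}`. -/
noncomputable def jumpA {I : Type} [Fintype I] [DecidableEq I] (σ P : Matrix I I ℂ) :
    Matrix I I ℂ :=
  hermPow σ ((1:ℝ)/4) * P * hermPow σ (-((1:ℝ)/4))

/-- The Lindblad generator `ρ ↦ −i[G,ρ] + AρA† − ½{A†A, ρ}` as a linear endomorphism. -/
noncomputable def lindbladOp {I : Type} [Fintype I] [DecidableEq I] (G A : Matrix I I ℂ) :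
    Module.End ℂ (Matrix I I ℂ) :=
  (-Complex.I) • (LinearMap.mulLeft ℂ G - LinearMap.mulRight ℂ G)
    + (LinearMap.mulRight ℂ (star A)) ∘ₗ (LinearMap.mulLeft ℂ A)
    - ((1:ℂ)/2) • (LinearMap.mulLeft ℂ (star A * A) + LinearMap.mulRight ℂ (star A * A))

/-- The balanced Lindbladian `L^P` for jump `P` with invariant state `σ`. -/
noncomputable def LP {I : Type} [Fintype I] [DecidableEq I] (σ P : Matrix I I ℂ) :
    Module.End ℂ (Matrix I I ℂ) :=
  lindbladOp (coherentG σ P) (jumpA σ P)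

/-- The three nonidentity single-qubit Pauli matrices. -/
noncomputable def pauli1 : Fin 3 → Matrix (Fin 2) (Fin 2) ℂ :=
  ![!![0, 1; 1, 0], !![0, -Complex.I; Complex.I, 0], !![1, 0; 0, -1]]

/-- The Pauli matrix `σ_p` acting at site `j` of an `n`-qubit system. -/
noncomputable def pauliAt {n : ℕ} (j : Fin n) (p : Fin 3) : QMat n :=
  fun a b => (if ∀ l, l ≠ j → a l = b l then 1 else 0) * pauli1 p (a j) (b j)

/-- The site-`j` balanced Lindbladian `L_j* = Σ_{P ∈ P_j} L^P`. -/
noncomputable def siteL {n : ℕ} (σ : QMat n) (j : Fin n) : Module.End ℂ (QMat n) :=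
  ∑ p : Fin 3, LP σ (pauliAt j p)

/-- The balanced Lindbladian `L* = Σ_j L_j*`. -/
noncomputable def fullL {n : ℕ} (σ : QMat n) : Module.End ℂ (QMat n) :=
  ∑ j, siteL σ j

/-- The quantum dynamical semigroup `e^{L}` generated by a Lindbladian, applied to a state. -/
noncomputable def superExp {n : ℕ} (L : Module.End ℂ (QMat n)) (ρ : QMat n) : QMat n :=
  ∑' k : ℕ, ((k.factorial : ℂ)⁻¹ • (L ^ k) ρ)

/-! ### Entropic quantities -/

/-- The von Neumann entropy `S(ρ) = −tr(ρ log ρ)` of a (Hermitian) matrix. -/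
noncomputable def vnEntropy {I : Type} [Fintype I] [DecidableEq I] (ρ : Matrix I I ℂ) : ℝ :=
  if h : ρ.IsHermitian then -∑ i, h.eigenvalues i * Real.log (h.eigenvalues i) else 0

/-- The reduced operator on the subsystem `S`: the partial trace over the complement of `S`. -/
noncomputable def reduceTo {n : ℕ} (S : Finset (Fin n)) (X : QMat n) :
    Matrix ({j : Fin n // j ∈ S} → Fin 2) ({j : Fin n // j ∈ S} → Fin 2) ℂ :=
  fun a b => ∑ c : {j : Fin n // j ∉ S} → Fin 2,
    X (fun j => if h : j ∈ S then a ⟨j, h⟩ else c ⟨j, h⟩)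
      (fun j => if h : j ∈ S then b ⟨j, h⟩ else c ⟨j, h⟩)

/-- The nested commutator `[H_{a_s}, [⋯, [H_{a_1}, X]⋯]]`. -/
noncomputable def nestedComm {n m : ℕ} (Hterm : Fin m → QMat n) {s : ℕ}
    (a : Fin s → Fin m) (X : QMat n) : QMat n :=
  (List.ofFn a).foldl (fun M t => Hterm t * M - M * Hterm t) X


section AuxHadamard

open NormedSpace

namespace HadamardAux

variable {A : Type*} [NormedRing A] [NormedAlgebra ℂ A] [CompleteSpace A]
lemma exp_clm_apply (T : A →L[ℂ] A) (z : A) :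
    exp T z = ∑' s : ℕ, ((s.factorial : ℂ)⁻¹ • (T ^ s) z) := by
  rw [exp_eq_tsum ℂ]
  have := (ContinuousLinearMap.apply ℂ A z).map_tsum
    (expSeries_summable' (𝕂 := ℂ) T)
  simpa using this

lemma exp_conj_ad (x y : A) :
    exp x * y * exp (-x) =
      ∑' s : ℕ, ((s.factorial : ℂ)⁻¹ • (fun M => x * M - M * x)^[s] y) := by
  set L : A →L[ℂ] A := ContinuousLinearMap.mul ℂ A x with hL
  set R : A →L[ℂ] A := (ContinuousLinearMap.mul ℂ A).flip x with hR
  have hcomm : Commute L (-R) := by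
    have : Commute L R := by
      ext z
      simp [hL, hR, mul_assoc]
    exact this.neg_right
  have hexpL : ∀ z : A, exp L z = exp x * z := by
    intro z
    rw [exp_clm_apply]
    have hpow : ∀ s : ℕ, (L ^ s) z = x ^ s * z := by
      intro s
      induction s with
      | zero => simp
      | succ s ih =>
        rw [pow_succ', pow_succ']
        rw [show (L * L ^ s) z = L ((L ^ s) z) from rfl, ih]
        simp [hL, mul_assoc]
    simp_rw [hpow]
    rw [exp_eq_tsum ℂ]
    have := ((ContinuousLinearMap.mul ℂ A).flip z).map_tsum (expSeries_summable' (𝕂 := ℂ) x)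
    simpa [smul_mul_assoc] using this.symm
  have hexpR : ∀ z : A, exp (-R) z = z * exp (-x) := by
    intro z
    have hpow : ∀ (s : ℕ) (w : A), ((-R) ^ s) w = w * (-x) ^ s := by
      intro s
      induction s with
      | zero => intro w; simp
      | succ s ih =>
        intro w
        rw [pow_succ']
        rw [show ((-R) * (-R) ^ s) w = (-R) (((-R) ^ s) w) from rfl, ih]
        have : (-R) (w * (-x) ^ s) = (w * (-x) ^ s) * (-x) := by simp [hR]
        rw [this, pow_succ, mul_assoc]
    rw [exp_clm_apply]
    simp_rw [hpow]
    rw [exp_eq_tsum ℂ]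
    have := (ContinuousLinearMap.mul ℂ A z).map_tsum (expSeries_summable' (𝕂 := ℂ) (-x))
    simpa [mul_smul_comm] using this.symm
  have key : exp (L - R) y = exp x * y * exp (-x) := by
    let +nondep : NormedAlgebra ℚ (A →L[ℂ] A) := .restrictScalars ℚ ℂ (A →L[ℂ] A)
    rw [sub_eq_add_neg, exp_add_of_commute hcomm]
    rw [show (exp L * exp (-R)) y = exp L (exp (-R) y) from rfl, hexpR, hexpL, mul_assoc]
  have hiter : ∀ (s : ℕ) (w : A), ((L - R) ^ s) w = (fun M => x * M - M * x)^[s] w := by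
    intro s
    induction s with
    | zero => intro w; simp
    | succ s ih =>
      intro w
      rw [pow_succ', Function.iterate_succ']
      rw [show ((L - R) * (L - R) ^ s) w = (L - R) (((L - R) ^ s) w) from rfl, ih]
      rfl
  rw [← key, exp_clm_apply]
  exact tsum_congr fun s => by rw [hiter]

variable {n m : ℕ} (Hterm : Fin m → QMat n)

lemma nestedComm_succ {s : ℕ} (a : Fin (s+1) → Fin m) (X : QMat n) :
    nestedComm Hterm a X
      = nestedComm Hterm (fun i => a i.succ) (Hterm (a 0) * X - X * Hterm (a 0)) := by
  rw [nestedComm, List.ofFn_succ]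
  rfl

lemma nestedComm_sum {ι : Type*} (t : Finset ι) {s : ℕ} (a : Fin s → Fin m)
    (Y : ι → QMat n) :
    nestedComm Hterm a (∑ i ∈ t, Y i) = ∑ i ∈ t, nestedComm Hterm a (Y i) := by
  induction s generalizing Y with
  | zero => rfl
  | succ s ih =>
    rw [nestedComm_succ]
    simp_rw [nestedComm_succ Hterm a]
    rw [Finset.mul_sum, Finset.sum_mul, ← Finset.sum_sub_distrib]
    exact ih (fun i => a i.succ) _

lemma iterate_ad_eq_sum (s : ℕ) (X : QMat n) :
    (fun M => (∑ t, Hterm t) * M - M * (∑ t, Hterm t))^[s] X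
      = ∑ a : Fin s → Fin m, nestedComm Hterm a X := by
  induction s generalizing X with
  | zero =>
    have h0 : ∀ a : Fin 0 → Fin m, nestedComm Hterm a X = X := by
      intro a; simp [nestedComm]
    simp only [Function.iterate_zero, id_eq]
    rw [Finset.sum_congr rfl (fun a _ => h0 a), Finset.sum_const]
    simp
  | succ s ih =>
    rw [Function.iterate_succ, Function.comp_apply, ih]
    have h2 : (∑ t, Hterm t) * X - X * (∑ t, Hterm t)
        = ∑ t, (Hterm t * X - X * Hterm t) := by
      rw [Finset.sum_mul, Finset.mul_sum, ← Finset.sum_sub_distrib]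
    rw [h2]
    rw [Finset.sum_congr rfl (fun a _ => nestedComm_sum Hterm Finset.univ a _)]
    rw [← Equiv.sum_comp (Fin.consEquiv fun _ => Fin m)
      (fun a => nestedComm Hterm a X), Fintype.sum_prod_type]
    rw [Finset.sum_comm]
    refine Finset.sum_congr rfl (fun a _ => Finset.sum_congr rfl (fun t _ => ?_))
    rw [show (Fin.consEquiv fun _ => Fin m) (a, t) = Fin.cons a t from rfl, nestedComm_succ]
    simp [Fin.cons_zero, Fin.cons_succ]

lemma iterate_smul_ad (H : QMat n) (α : ℂ) (s : ℕ) (X : QMat n) :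
    (fun M => (α • H) * M - M * (α • H))^[s] X
      = α ^ s • (fun M => H * M - M * H)^[s] X := by
  induction s with
  | zero => simp
  | succ s ih =>
    rw [Function.iterate_succ', Function.iterate_succ', Function.comp_apply,
      Function.comp_apply, ih]
    simp only [smul_mul_assoc, mul_smul_comm, smul_smul, smul_sub, ← smul_sub,
      mul_comm α (α ^ s), pow_succ]

variable {n : ℕ}

lemma supportedOn_univ (M : QMat n) : SupportedOn Finset.univ M := by
  constructor
  · rintro a b ⟨j, hj, -⟩
    exact absurd (Finset.mem_univ j) hj
  · intro a b a' b' ha hb _ _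
    rw [funext fun j => ha j (Finset.mem_univ j), funext fun j => hb j (Finset.mem_univ j)]

lemma SupportedOn.mono {S S' : Finset (Fin n)} {M : QMat n} (h : S ⊆ S')
    (hM : SupportedOn S M) : SupportedOn S' M := by
  constructor
  · rintro a b ⟨j, hj, hne⟩
    exact hM.1 a b ⟨j, fun c => hj (h c), hne⟩
  · intro a b a' b' ha hb hab ha'b'
    by_cases hc : ∀ j ∉ S, a j = b j
    · have hc' : ∀ j ∉ S, a' j = b' j := by
        intro j hj
        by_cases hj' : j ∈ S'
        · rw [← ha j hj', ← hb j hj']; exact hc j hj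
        · exact ha'b' j hj'
      exact hM.2 a b a' b' (fun j hj => ha j (h hj)) (fun j hj => hb j (h hj)) hc hc'
    · push_neg at hc
      obtain ⟨j, hj, hne⟩ := hc
      rw [hM.1 a b ⟨j, hj, hne⟩]
      by_cases hj' : j ∈ S'
      · rw [hM.1 a' b' ⟨j, hj, by rw [← ha j hj', ← hb j hj']; exact hne⟩]
      · exact (hne (hab j hj')).elim

lemma SupportedOn.inter {S T : Finset (Fin n)} {M : QMat n}
    (hS : SupportedOn S M) (hT : SupportedOn T M) : SupportedOn (S ∩ T) M := by
  constructor
  · rintro a b ⟨j, hj, hne⟩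
    rw [Finset.mem_inter] at hj
    by_cases hjS : j ∈ S
    · exact hT.1 a b ⟨j, fun hjT => hj ⟨hjS, hjT⟩, hne⟩
    · exact hS.1 a b ⟨j, hjS, hne⟩
  · intro a b a' b' ha hb hab ha'b'
    set a₁ : QIdx n := fun j => if j ∈ S then a j else a' j with ha₁
    set b₁ : QIdx n := fun j => if j ∈ S then b j else b' j with hb₁
    have h1 : M a b = M a₁ b₁ := by
      refine hS.2 a b a₁ b₁ (fun j hj => by simp [ha₁, hj]) (fun j hj => by simp [hb₁, hj])
        (fun j hj => hab j (fun hj' => hj (Finset.mem_inter.mp hj').1))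
        (fun j hj => ?_)
      simp only [ha₁, hb₁, if_neg hj]
      exact ha'b' j (fun hj' => hj (Finset.mem_inter.mp hj').1)
    have h2 : M a₁ b₁ = M a' b' := by
      refine hT.2 a₁ b₁ a' b' (fun j hj => ?_) (fun j hj => ?_) (fun j hj => ?_)
        (fun j hj => ha'b' j (fun hj' => hj (Finset.mem_inter.mp hj').2))
      · by_cases hjS : j ∈ S
        · simp only [ha₁, if_pos hjS]; exact ha j (Finset.mem_inter.mpr ⟨hjS, hj⟩)
        · simp [ha₁, hjS]
      · by_cases hjS : j ∈ S
        · simp only [hb₁, if_pos hjS]; exact hb j (Finset.mem_inter.mpr ⟨hjS, hj⟩)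
        · simp [hb₁, hjS]
      · by_cases hjS : j ∈ S
        · simp only [ha₁, hb₁, if_pos hjS]
          exact hab j (fun hj' => hj (Finset.mem_inter.mp hj').2)
        · simp only [ha₁, hb₁, if_neg hjS]
          exact ha'b' j (fun hj' => hj (Finset.mem_inter.mp hj').2)
    rw [h1, h2]

lemma supportedOn_supp (M : QMat n) : SupportedOn (supp M) M := by
  rw [supp]
  have : ∀ s : Finset (Finset (Fin n)),
      (∀ S ∈ s, SupportedOn S M) → SupportedOn (s.inf id) M := by
    intro s
    induction s using Finset.induction_on with
    | empty =>
      intro _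
      rw [Finset.inf_empty]
      exact supportedOn_univ M
    | insert _ _ hS ih =>
      intro h
      rw [Finset.inf_insert]
      exact SupportedOn.inter (h _ (Finset.mem_insert_self _ _))
        (ih fun S hS' => h S (Finset.mem_insert_of_mem hS'))
  exact this _ fun S hS => (Finset.mem_filter.mp hS).2

lemma supp_subset_of_supportedOn {S : Finset (Fin n)} {M : QMat n}
    (h : SupportedOn S M) : supp M ⊆ S :=
by
  have hmem : S ∈ Finset.univ.filter (fun S : Finset (Fin n) => SupportedOn S M) :=
    Finset.mem_filter.mpr ⟨Finset.mem_univ S, h⟩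
  exact Finset.inf_le (f := id) hmem

lemma mul_entry_eq {S T : Finset (Fin n)} {A B : QMat n}
    (hS : SupportedOn S A) (hT : SupportedOn T B) (hd : Disjoint S T)
    (a b : QIdx n) :
    (A * B) a b = A a (fun j => if j ∈ S then b j else a j)
      * B (fun j => if j ∈ S then b j else a j) b := by
  set c0 : QIdx n := fun j => if j ∈ S then b j else a j with hc0
  rw [Matrix.mul_apply]
  refine Finset.sum_eq_single c0 (fun c _ hne => ?_) (fun h => absurd (Finset.mem_univ _) h)
  have : ∃ j, c j ≠ c0 j := by
    by_contra hcon
    push_neg at hcon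
    exact hne (funext hcon)
  obtain ⟨j, hj⟩ := this
  by_cases hjS : j ∈ S
  · have hjT : j ∉ T := Finset.disjoint_left.mp hd hjS
    rw [hT.1 c b ⟨j, hjT, by simpa [hc0, hjS] using hj⟩, mul_zero]
  · rw [hS.1 a c ⟨j, hjS, fun h => hj (by simp [hc0, hjS, h.symm])⟩, zero_mul]

lemma commute_of_disjoint {S T : Finset (Fin n)} {A B : QMat n}
    (hS : SupportedOn S A) (hT : SupportedOn T B) (hd : Disjoint S T) :
    A * B = B * A := by
  ext a b
  rw [mul_entry_eq hS hT hd a b, mul_entry_eq hT hS hd.symm a b]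
  set c1 : QIdx n := fun j => if j ∈ S then b j else a j with hc1
  set c2 : QIdx n := fun j => if j ∈ T then b j else a j with hc2
  by_cases hout : ∀ j, j ∉ S → j ∉ T → a j = b j
  · have h1 : A a c1 = A c2 b := by
      refine hS.2 a c1 c2 b (fun j hj => ?_) (fun j hj => ?_) (fun j hj => ?_) (fun j hj => ?_)
      · have : j ∉ T := Finset.disjoint_left.mp hd hj
        simp [hc2, this]
      · simp [hc1, hj]
      · simp [hc1, hj]
      · by_cases hjT : j ∈ T
        · simp [hc2, hjT]
        · simp only [hc2, if_neg hjT]; exact hout j hj hjT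
    have h2 : B c1 b = B a c2 := by
      refine hT.2 c1 b a c2 (fun j hj => ?_) (fun j hj => ?_) (fun j hj => ?_) (fun j hj => ?_)
      · have : j ∉ S := Finset.disjoint_right.mp hd hj
        simp [hc1, this]
      · simp [hc2, hj]
      · by_cases hjS : j ∈ S
        · simp [hc1, hjS]
        · simp only [hc1, if_neg hjS]; exact hout j hjS hj
      · simp [hc2, hj]
    rw [h1, h2, mul_comm]
  · push_neg at hout
    obtain ⟨j, hjS, hjT, hne⟩ := hout
    rw [hT.1 c1 b ⟨j, hjT, by simpa [hc1, hjS] using hne⟩,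
      hS.1 c2 b ⟨j, hjS, by simpa [hc2, hjT] using hne⟩, mul_zero, mul_zero]

lemma SupportedOn.sub {S : Finset (Fin n)} {A B : QMat n}
    (hA : SupportedOn S A) (hB : SupportedOn S B) : SupportedOn S (A - B) := by
  constructor
  · intro a b h
    simp only [Matrix.sub_apply, hA.1 a b h, hB.1 a b h, sub_zero]
  · intro a b a' b' ha hb hab ha'b'
    simp only [Matrix.sub_apply, hA.2 a b a' b' ha hb hab ha'b',
      hB.2 a b a' b' ha hb hab ha'b']

lemma SupportedOn.mul {S T : Finset (Fin n)} {A B : QMat n}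
    (hA : SupportedOn S A) (hB : SupportedOn T B) : SupportedOn (S ∪ T) (A * B) := by
  constructor
  · rintro a b ⟨j, hj, hne⟩
    rw [Finset.mem_union] at hj
    push_neg at hj
    rw [Matrix.mul_apply]
    refine Finset.sum_eq_zero fun c _ => ?_
    by_cases hc : c j = a j
    · rw [hB.1 c b ⟨j, hj.2, by rw [hc]; exact hne⟩, mul_zero]
    · rw [hA.1 a c ⟨j, hj.1, fun h => hc h.symm⟩, zero_mul]
  · intro a b a' b' ha hb hab ha'b'
    rw [Matrix.mul_apply, Matrix.mul_apply]
    set e : QIdx n → QIdx n := fun c j => if j ∈ S ∪ T then c j else a' j with he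
    set e' : QIdx n → QIdx n := fun c j => if j ∈ S ∪ T then c j else a j with he'
    set F : Finset (QIdx n) := Finset.univ.filter fun c => ∀ j ∉ S ∪ T, c j = a j with hF
    set F' : Finset (QIdx n) := Finset.univ.filter fun c => ∀ j ∉ S ∪ T, c j = a' j with hF'
    have hsum1 : ∑ c, A a c * B c b = ∑ c ∈ F, A a c * B c b := by
      refine (Finset.sum_subset (Finset.subset_univ F) fun c _ hc => ?_).symm
      simp only [hF, Finset.mem_filter, Finset.mem_univ, true_and] at hc
      push_neg at hc
      obtain ⟨j, hj, hne⟩ := hc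
      rw [hA.1 a c ⟨j, fun h => hj (Finset.mem_union_left _ h), fun h => hne h.symm⟩, zero_mul]
    have hsum2 : ∑ c, A a' c * B c b' = ∑ c ∈ F', A a' c * B c b' := by
      refine (Finset.sum_subset (Finset.subset_univ F') fun c _ hc => ?_).symm
      simp only [hF', Finset.mem_filter, Finset.mem_univ, true_and] at hc
      push_neg at hc
      obtain ⟨j, hj, hne⟩ := hc
      rw [hA.1 a' c ⟨j, fun h => hj (Finset.mem_union_left _ h), fun h => hne h.symm⟩, zero_mul]
    rw [hsum1, hsum2]
    refine Finset.sum_nbij' (i := e) (j := e') ?_ ?_ ?_ ?_ ?_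
    · intro c hc
      simp only [hF', Finset.mem_filter, Finset.mem_univ, true_and]
      intro j hj
      simp only [he]
      rw [if_neg hj]
    · intro c hc
      simp only [hF, Finset.mem_filter, Finset.mem_univ, true_and]
      intro j hj
      simp only [he']
      rw [if_neg hj]
    · intro c hc
      simp only [hF, Finset.mem_filter, Finset.mem_univ, true_and] at hc
      funext j
      by_cases hj : j ∈ S ∪ T
      · simp only [he, he']
        rw [if_pos hj, if_pos hj]
      · simp only [he, he', if_neg hj]
        exact (hc j hj).symm
    · intro c hc
      simp only [hF', Finset.mem_filter, Finset.mem_univ, true_and] at hc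
      funext j
      by_cases hj : j ∈ S ∪ T
      · simp only [he, he']
        rw [if_pos hj, if_pos hj]
      · simp only [he, he', if_neg hj]
        exact (hc j hj).symm
    · intro c hc
      simp only [hF, Finset.mem_filter, Finset.mem_univ, true_and] at hc
      have hec : ∀ j, j ∈ S ∪ T → e c j = c j := fun j hj => by
        simp only [he]; rw [if_pos hj]
      have hec' : ∀ j, j ∉ S ∪ T → e c j = a' j := fun j hj => by
        simp only [he]; rw [if_neg hj]
      by_cases h1 : ∀ j ∉ S, a j = c j
      · have h1' : ∀ j ∉ S, a' j = e c j := by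
          intro j hj
          by_cases hjU : j ∈ S ∪ T
          · rw [hec j hjU, ← h1 j hj]
            exact (ha j hjU).symm
          · rw [hec' j hjU]
        have hAeq : A a c = A a' (e c) := by
          refine hA.2 a c a' (e c) (fun j hj => ha j (Finset.mem_union_left _ hj))
            (fun j hj => (hec j (Finset.mem_union_left _ hj)).symm) h1 h1'
        by_cases h2 : ∀ j ∉ T, c j = b j
        · have h2' : ∀ j ∉ T, e c j = b' j := by
            intro j hj
            by_cases hjU : j ∈ S ∪ T
            · rw [hec j hjU, h2 j hj]
              exact hb j hjU
            · rw [hec' j hjU]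
              exact ha'b' j hjU
          have hBeq : B c b = B (e c) b' := by
            refine hB.2 c b (e c) b' (fun j hj => (hec j (Finset.mem_union_right _ hj)).symm)
              (fun j hj => hb j (Finset.mem_union_right _ hj)) h2 h2'
          rw [hAeq, hBeq]
        · push_neg at h2
          obtain ⟨j, hj, hne⟩ := h2
          have hjS : j ∈ S := by
            by_contra hjS
            have hjU : j ∉ S ∪ T := fun h => by
              rcases Finset.mem_union.mp h with h | h
              · exact hjS h
              · exact hj h
            exact hne ((hc j hjU).trans (hab j hjU))
          rw [hB.1 c b ⟨j, hj, hne⟩, hB.1 (e c) b' ⟨j, hj, by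
            rw [hec j (Finset.mem_union_left _ hjS), ← hb j (Finset.mem_union_left _ hjS)]
            exact hne⟩, mul_zero, mul_zero]
      · push_neg at h1
        obtain ⟨j, hj, hne⟩ := h1
        have hjT : j ∈ T := by
          by_contra hjT
          have hjU : j ∉ S ∪ T := fun h => by
            rcases Finset.mem_union.mp h with h | h
            · exact hj h
            · exact hjT h
          exact hne ((hc j hjU).symm)
        rw [hA.1 a c ⟨j, hj, hne⟩, hA.1 a' (e c) ⟨j, hj, by
          rw [hec j (Finset.mem_union_right _ hjT), ← ha j (Finset.mem_union_right _ hjT)]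
          exact hne⟩, zero_mul, zero_mul]

variable {m : ℕ} (Hterm : Fin m → QMat n)

lemma nestedComm_succ' {s : ℕ} (a : Fin (s+1) → Fin m) (X : QMat n) :
    nestedComm Hterm a X
      = nestedComm Hterm (fun i => a i.succ) (Hterm (a 0) * X - X * Hterm (a 0)) := by
  rw [nestedComm, List.ofFn_succ]
  rfl

lemma nestedComm_zero {s : ℕ} (a : Fin s → Fin m) :
    nestedComm Hterm a (0 : QMat n) = 0 := by
  induction s with
  | zero => rfl
  | succ s ih =>
    rw [nestedComm_succ']
    simpa using ih (fun i => a i.succ)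

lemma nestedComm_eq_zero_of_not_cluster :
    ∀ (s : ℕ) (a : Fin s → Fin m) (X : QMat n) (S0 : Finset (Fin n)),
      SupportedOn S0 X → ¬ IsClusterFrom Hterm S0 a → nestedComm Hterm a X = 0 := by
  intro s
  induction s with
  | zero => intro a X S0 _ hnc; exact absurd (fun ℓ => ℓ.elim0) hnc
  | succ s ih =>
    intro a X S0 hX hnc
    rw [nestedComm_succ']
    by_cases hint : (supp (Hterm (a 0)) ∩ S0).Nonempty
    · -- recurse with the enlarged set
      refine ih (fun i => a i.succ) _ (S0 ∪ supp (Hterm (a 0))) ?_ ?_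
      · have h1 : SupportedOn (supp (Hterm (a 0)) ∪ S0) (Hterm (a 0) * X) :=
          SupportedOn.mul (supportedOn_supp _) hX
        have h2 : SupportedOn (S0 ∪ supp (Hterm (a 0))) (X * Hterm (a 0)) :=
          SupportedOn.mul hX (supportedOn_supp _)
        exact SupportedOn.sub (SupportedOn.mono (le_of_eq (Finset.union_comm _ _)) h1) h2
      · intro hcl
        refine hnc fun ℓ => ?_
        refine Fin.cases ?_ ?_ ℓ
        · obtain ⟨j, hj⟩ := hint
          rw [Finset.mem_inter] at hj
          exact ⟨j, hj.1, Or.inl hj.2⟩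
        · intro ℓ'
          obtain ⟨j, hjmem, hj⟩ := hcl ℓ'
          refine ⟨j, hjmem, ?_⟩
          rcases hj with hj | ⟨p, hp, hjp⟩
          · rcases Finset.mem_union.mp hj with hj | hj
            · exact Or.inl hj
            · exact Or.inr ⟨0, Fin.succ_pos ℓ', hj⟩
          · exact Or.inr ⟨p.succ, by simpa using hp, hjp⟩
    · -- the first commutator is zero
      have hd : Disjoint (supp (Hterm (a 0))) S0 := by
        rw [Finset.disjoint_iff_inter_eq_empty, ← Finset.not_nonempty_iff_eq_empty]
        exact hint
      rw [commute_of_disjoint (supportedOn_supp _) hX hd, sub_self]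
      exact nestedComm_zero Hterm _

lemma cluster_count (d : ℕ) (hd : 0 < d)
    (hdeg : ∀ a, (Finset.univ.filter fun b =>
        (supp (Hterm b) ∩ supp (Hterm a)).Nonempty).card ≤ d)
    (b : Fin m) (S0 : Finset (Fin n)) (hsub : S0 ⊆ supp (Hterm b)) (s : ℕ) :
    Nat.card {a : Fin s → Fin m // IsClusterFrom Hterm S0 a}
      ≤ Nat.factorial s * (d + 1) ^ s := by
  classical
  set F : Fin m → Finset (Fin m) := fun t => Finset.univ.filter fun c =>
    (supp (Hterm c) ∩ supp (Hterm t)).Nonempty with hF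
  have hemb : ∀ t : Fin m, ∃ f : Fin m → Fin d,
      ∀ c c', c ∈ F t → c' ∈ F t → f c = f c' → c = c' := by
    intro t
    have hcard : Fintype.card {c // c ∈ F t} ≤ Fintype.card (Fin d) := by
      rw [Fintype.card_coe, Fintype.card_fin]
      exact hdeg t
    obtain ⟨f⟩ := Function.Embedding.nonempty_of_card_le hcard
    refine ⟨fun c => if h : c ∈ F t then f ⟨c, h⟩ else ⟨0, hd⟩, ?_⟩
    intro c c' hc hc' hfe
    simp only at hfe
    rw [dif_pos hc, dif_pos hc'] at hfe
    exact congrArg Subtype.val (f.injective hfe)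
  choose ι hι using hemb
  have hroot : ∀ (a : Fin s → Fin m) (ℓ : Fin s),
      (supp (Hterm (a ℓ)) ∩ S0).Nonempty → a ℓ ∈ F b := by
    intro a ℓ ⟨j, hj⟩
    rw [Finset.mem_inter] at hj
    exact Finset.mem_filter.mpr ⟨Finset.mem_univ _,
      ⟨j, Finset.mem_inter.mpr ⟨hj.1, hsub hj.2⟩⟩⟩
  have hstep : ∀ (a : Fin s → Fin m), IsClusterFrom Hterm S0 a → ∀ ℓ : Fin s,
      ¬ (supp (Hterm (a ℓ)) ∩ S0).Nonempty →
      ∃ p : Fin s, p < ℓ ∧ a ℓ ∈ F (a p) := by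
    intro a ha ℓ hne
    obtain ⟨j, hjmem, hj⟩ := ha ℓ
    rcases hj with hj | ⟨p, hp, hjp⟩
    · exact absurd ⟨j, Finset.mem_inter.mpr ⟨hjmem, hj⟩⟩ hne
    · exact ⟨p, hp, Finset.mem_filter.mpr ⟨Finset.mem_univ _,
        ⟨j, Finset.mem_inter.mpr ⟨hjmem, hjp⟩⟩⟩⟩
  choose pf hpf1 hpf2 using hstep
  set enc : {a : Fin s → Fin m // IsClusterFrom Hterm S0 a} →
      (∀ ℓ : Fin s, Fin (ℓ.1 + 1) × Fin d) := fun x ℓ =>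
    if hP : (supp (Hterm (x.1 ℓ)) ∩ S0).Nonempty then
      (⟨ℓ.1, Nat.lt_succ_self _⟩, ι b (x.1 ℓ))
    else
      (⟨(pf x.1 x.2 ℓ hP).1, Nat.lt_succ_of_lt (hpf1 x.1 x.2 ℓ hP)⟩,
        ι (x.1 (pf x.1 x.2 ℓ hP)) (x.1 ℓ)) with henc
  have hinj : Function.Injective enc := by
    rintro ⟨a, ha⟩ ⟨a', ha'⟩ heq
    suffices hkey : ∀ k : ℕ, ∀ hk : k < s, a ⟨k, hk⟩ = a' ⟨k, hk⟩ by
      refine Subtype.ext (funext fun ℓ => ?_)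
      have := hkey ℓ.1 ℓ.2
      simpa using this
    intro k
    induction k using Nat.strong_induction_on with
    | _ k ihk =>
      intro hk
      have heqℓ := congrFun heq ⟨k, hk⟩
      set ℓ : Fin s := ⟨k, hk⟩ with hℓ
      rw [henc] at heqℓ
      simp only at heqℓ
      by_cases hP : (supp (Hterm (a ℓ)) ∩ S0).Nonempty <;>
        by_cases hP' : (supp (Hterm (a' ℓ)) ∩ S0).Nonempty
      · rw [dif_pos hP, dif_pos hP'] at heqℓ
        have hr : ι b (a ℓ) = ι b (a' ℓ) := congrArg Prod.snd heqℓ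
        exact hι b (a ℓ) (a' ℓ) (hroot a ℓ hP) (hroot a' ℓ hP') hr
      · rw [dif_pos hP, dif_neg hP'] at heqℓ
        have hq : (ℓ.1 : ℕ) = ((pf a' ha' ℓ hP').1 : ℕ) :=
          congrArg (fun x => (x.1 : ℕ)) heqℓ
        exact absurd hq.symm (Nat.ne_of_lt (hpf1 a' ha' ℓ hP'))
      · rw [dif_neg hP, dif_pos hP'] at heqℓ
        have hq : ((pf a ha ℓ hP).1 : ℕ) = (ℓ.1 : ℕ) :=
          congrArg (fun x => (x.1 : ℕ)) heqℓ
        exact absurd hq (Nat.ne_of_lt (hpf1 a ha ℓ hP))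
      · rw [dif_neg hP, dif_neg hP'] at heqℓ
        have hq : ((pf a ha ℓ hP).1 : ℕ) = ((pf a' ha' ℓ hP').1 : ℕ) :=
          congrArg (fun x => (x.1 : ℕ)) heqℓ
        set p := pf a ha ℓ hP with hp
        set p' := pf a' ha' ℓ hP' with hp'
        have hpp' : p = p' := Fin.ext hq
        have hplt : (p : ℕ) < k := hpf1 a ha ℓ hP
        have hap : a p = a' p := by
          have := ihk p.1 hplt p.2
          simpa using this
        have hr : ι (a p) (a ℓ) = ι (a' p') (a' ℓ) := congrArg Prod.snd heqℓ
        rw [← hpp', ← hap] at hr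
        refine hι (a p) (a ℓ) (a' ℓ) (hpf2 a ha ℓ hP) ?_ hr
        have := hpf2 a' ha' ℓ hP'
        rw [← hp', ← hpp', ← hap] at this
        exact this
  have hle := Nat.card_le_card_of_injective enc hinj
  refine hle.trans ?_
  rw [Nat.card_eq_fintype_card, Fintype.card_pi]
  have hprod : ∀ ℓ : Fin s, Fintype.card (Fin (ℓ.1 + 1) × Fin d) = (ℓ.1 + 1) * d := by
    intro ℓ
    rw [Fintype.card_prod, Fintype.card_fin, Fintype.card_fin]
  rw [Finset.prod_congr rfl fun ℓ _ => hprod ℓ, Finset.prod_mul_distrib,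
    Finset.prod_const, Finset.card_univ, Fintype.card_fin]
  have h1 : ∏ ℓ : Fin s, ((ℓ : ℕ) + 1) = Nat.factorial s := by
    rw [Fin.prod_univ_eq_prod_range (fun i => i + 1)]
    exact Finset.prod_range_add_one_eq_factorial s
  rw [h1]
  exact Nat.mul_le_mul_left _ (Nat.pow_le_pow_left (Nat.le_succ d) s)

lemma opNorm_nonneg' {I : Type} [Fintype I] [DecidableEq I] (A : Matrix I I ℂ) :
    0 ≤ opNorm A := norm_nonneg _

lemma opNorm_mul_le' {I : Type} [Fintype I] [DecidableEq I] (A B : Matrix I I ℂ) :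
    opNorm (A * B) ≤ opNorm A * opNorm B := by
  rw [opNorm, opNorm, opNorm, map_mul]
  exact norm_mul_le _ _

lemma opNorm_sub_le' {I : Type} [Fintype I] [DecidableEq I] (A B : Matrix I I ℂ) :
    opNorm (A - B) ≤ opNorm A + opNorm B := by
  rw [opNorm, opNorm, opNorm, map_sub]
  exact norm_sub_le _ _

lemma opNorm_nested {n m : ℕ} (Hterm : Fin m → QMat n)
    (hopnorm : ∀ a, opNorm (Hterm a) ≤ 1) :
    ∀ (s : ℕ) (a : Fin s → Fin m) (X : QMat n),
      opNorm (nestedComm Hterm a X) ≤ 2 ^ s * opNorm X := by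
  intro s
  induction s with
  | zero =>
    intro a X
    have : nestedComm Hterm a X = X := by simp [nestedComm]
    rw [this]
    simp
  | succ s ih =>
    intro a X
    have hstep : nestedComm Hterm a X
        = nestedComm Hterm (fun i => a i.succ) (Hterm (a 0) * X - X * Hterm (a 0)) := by
      rw [nestedComm, List.ofFn_succ]; rfl
    rw [hstep]
    refine (ih _ _).trans ?_
    have h1 : opNorm (Hterm (a 0) * X - X * Hterm (a 0)) ≤ 2 * opNorm X := by
      refine (opNorm_sub_le' _ _).trans ?_
      have h2 := (opNorm_mul_le' (Hterm (a 0)) X).trans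
        (mul_le_of_le_one_left (opNorm_nonneg' X) (hopnorm (a 0)))
      have h3 := (opNorm_mul_le' X (Hterm (a 0))).trans
        (mul_le_of_le_one_right (opNorm_nonneg' X) (hopnorm (a 0)))
      linarith
    calc 2 ^ s * opNorm (Hterm (a 0) * X - X * Hterm (a 0))
        ≤ 2 ^ s * (2 * opNorm X) := by
          exact mul_le_mul_of_nonneg_left h1 (by positivity)
      _ = 2 ^ (s + 1) * opNorm X := by ring

end HadamardAux

end AuxHadamard

/-- **Hadamard expansion, norm bound, and cluster counting**:
`e^{αH} X e^{−αH} = Σ_k Σ_{a ∈ [m]^k} (α^k/k!) [H_{a_k},[…[H_{a_1},X]…]]`, with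
(i) `‖[H_{a_k},[…[H_{a_1},X]…]]‖_op ≤ 2^k ‖X‖_op`, (ii) the nested commutator vanishes
unless `a` is a cluster from `supp(X)`, and (iii) if `supp(X) ⊆ supp(H_b)` then the number of
length-`k` clusters from `supp(X)` is at most `k! (d+1)^k`. -/
theorem hadamard_expansion_and_cluster_counting
    (n m : ℕ) (Hterm : Fin m → QMat n)
    (hherm : ∀ a, (Hterm a).IsHermitian)
    (hopnorm : ∀ a, opNorm (Hterm a) ≤ 1)
    (d : ℕ) (hd2 : 2 ≤ d)
    (hdeg : ∀ a, (Finset.univ.filter fun b =>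
        (supp (Hterm b) ∩ supp (Hterm a)).Nonempty).card ≤ d) :
    (∀ (α : ℂ) (X : QMat n),
        mexp (α • ∑ a, Hterm a) * X * mexp ((-α) • ∑ a, Hterm a)
          = ∑' s : ℕ, ∑ a : Fin s → Fin m,
              (α ^ s / (Nat.factorial s : ℂ)) • nestedComm Hterm a X) ∧
    (∀ (s : ℕ) (a : Fin s → Fin m) (X : QMat n),
        opNorm (nestedComm Hterm a X) ≤ 2 ^ s * opNorm X) ∧
    (∀ (s : ℕ) (a : Fin s → Fin m) (X : QMat n),
        ¬ IsClusterFrom Hterm (supp X) a → nestedComm Hterm a X = 0) ∧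
    (∀ (b : Fin m) (X : QMat n), supp X ⊆ supp (Hterm b) → ∀ s : ℕ,
        Nat.card {a : Fin s → Fin m // IsClusterFrom Hterm (supp X) a}
          ≤ Nat.factorial s * (d + 1) ^ s) := by
  constructor
  · -- Part 1: Hadamard expansion
    intro α X
    letI : SeminormedRing (QMat n) := Matrix.linftyOpSemiNormedRing
    letI : NormedRing (QMat n) := Matrix.linftyOpNormedRing
    letI : NormedAlgebra ℂ (QMat n) := Matrix.linftyOpNormedAlgebra
    have hm : ∀ B : QMat n, mexp B = NormedSpace.exp B := by
      intro B
      rw [NormedSpace.exp_eq_tsum ℂ]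
      rfl
    erw [hm, hm, show ((-α) • ∑ a, Hterm a) = -(α • ∑ a, Hterm a) by rw [neg_smul],
      HadamardAux.exp_conj_ad]
    refine tsum_congr fun s => ?_
    rw [HadamardAux.iterate_smul_ad, smul_smul, HadamardAux.iterate_ad_eq_sum,
      Finset.smul_sum]
    refine Finset.sum_congr rfl fun a _ => ?_
    congr 1
    rw [div_eq_mul_inv, mul_comm]
  refine ⟨HadamardAux.opNorm_nested Hterm hopnorm, ?_, ?_⟩
  · -- Part 3: vanishing off clusters
    intro s a X hnc
    exact HadamardAux.nestedComm_eq_zero_of_not_cluster Hterm s a X (supp X)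
      (HadamardAux.supportedOn_supp X) hnc
  · -- Part 4: cluster counting
    intro b X hsub s
    exact HadamardAux.cluster_count Hterm d (by omega) hdeg b (supp X) hsub s


end
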